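/- For all ξ ∈ ℝ, n ∈ ℤ, s ∈ ℝ, k ∈ {−1, 1}, λ ≥ 0 and p ∈ ℕ, with ⟨n,ξ⟩ = (1+n²+ξ²)^{1/2} and A^{λ,p}_n(ξ) = e^{λ⟨n,ξ⟩}⟨n,ξ⟩^p, one has A^{λ,p}_n(ξ)·|ξ − ns| ≤ C_p ( A^{λ,p+1}_{n−k}(ξ−ks)·A^{λ,1}_1(s) + A^{λ,1}_{n−k}(ξ−ks)·A^{λ,p+1}_1(s) ) for a constant C_p depending only on p. -/
import Mathlib


open Real

/-- The Japanese bracket `⟨n,ξ⟩ = (1+n²+ξ²)^{1/2}`. -/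
noncomputable def brkt (n : ℤ) (ξ : ℝ) : ℝ := Real.sqrt (1 + (n : ℝ) ^ 2 + ξ ^ 2)

/-- The analytic weight `A^{λ,p}_n(ξ) = e^{λ⟨n,ξ⟩} ⟨n,ξ⟩^p`. -/
noncomputable def Awt (lam : ℝ) (p : ℕ) (n : ℤ) (ξ : ℝ) : ℝ :=
  Real.exp (lam * brkt n ξ) * (brkt n ξ) ^ p

lemma brkt_sq (n : ℤ) (ξ : ℝ) : brkt n ξ ^ 2 = 1 + (n : ℝ) ^ 2 + ξ ^ 2 := by
  rw [brkt, Real.sq_sqrt] ; positivity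

lemma brkt_one_le (n : ℤ) (ξ : ℝ) : 1 ≤ brkt n ξ := by
  have h : (1:ℝ) ≤ 1 + (n : ℝ) ^ 2 + ξ ^ 2 := by nlinarith [sq_nonneg ((n:ℝ)), sq_nonneg ξ]
  calc (1:ℝ) = Real.sqrt 1 := by simp
    _ ≤ Real.sqrt (1 + (n : ℝ) ^ 2 + ξ ^ 2) := Real.sqrt_le_sqrt h
    _ = brkt n ξ := rfl

lemma brkt_tri (n k : ℤ) (ξ s : ℝ) (hk : (k:ℝ) = 1 ∨ (k:ℝ) = -1) :
    brkt n ξ ≤ brkt (n-k) (ξ - (k:ℝ)*s) + brkt 1 s := by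
  set a := brkt (n-k) (ξ - (k:ℝ)*s) with hadef
  set b := brkt 1 s with hbdef
  have ha1 : 1 ≤ a := brkt_one_le _ _
  have hb1 : 1 ≤ b := brkt_one_le _ _
  have ha : a ^ 2 = 1 + ((n:ℝ) - k) ^ 2 + (ξ - (k:ℝ)*s) ^ 2 := by
    have := brkt_sq (n-k) (ξ - (k:ℝ)*s); push_cast at this ⊢; linarith
  have hb : b ^ 2 = 2 + s ^ 2 := by
    have := brkt_sq 1 s; push_cast at this ⊢; linarith
  have hab : (0:ℝ) < a * b := mul_pos (lt_of_lt_of_le one_pos ha1) (lt_of_lt_of_le one_pos hb1)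
  have h : (1 + (n:ℝ)^2 + ξ^2) ≤ (a+b)^2 := by
    rcases hk with hk | hk <;> rw [hk] at ha
    · have hd : (n:ℝ) + s*ξ - s^2 ≤ a*b := by
        have hL : ((n:ℝ) + s*ξ - s^2)^2 ≤ a^2 * b^2 := by
          nlinarith [sq_nonneg (((n:ℝ)-1)*s - (ξ-s)), sq_nonneg (s - (ξ-s)),
            sq_nonneg (1 - ((n:ℝ)-1))]
        nlinarith [hL, hab]
      nlinarith [hd, ha, hb]
    · have hd : -(n:ℝ) - s*ξ - s^2 ≤ a*b := by
        have hL : (-(n:ℝ) - s*ξ - s^2)^2 ≤ a^2 * b^2 := by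
          nlinarith [sq_nonneg (((n:ℝ)+1)*(-s) - (ξ+s)*(-1)), sq_nonneg ((-s) - (ξ+s)),
            sq_nonneg ((-1) - ((n:ℝ)+1))]
        nlinarith [hL, hab]
      nlinarith [hd, ha, hb]
  calc brkt n ξ ≤ Real.sqrt ((a+b)^2) := Real.sqrt_le_sqrt h
    _ = a + b := Real.sqrt_sq (by linarith)

lemma abs_bound (n k : ℤ) (ξ s : ℝ) (hk : ((k:ℝ))^2 = 1) :
    |ξ - (n:ℝ)*s| ≤ Real.sqrt 2 * (brkt (n-k) (ξ - (k:ℝ)*s) * brkt 1 s) := by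
  set a := brkt (n-k) (ξ - (k:ℝ)*s) with hadef
  set b := brkt 1 s with hbdef
  have ha1 : 1 ≤ a := brkt_one_le _ _
  have hb1 : 1 ≤ b := brkt_one_le _ _
  have ha : a ^ 2 = 1 + ((n:ℝ) - k) ^ 2 + (ξ - (k:ℝ)*s) ^ 2 := by
    have := brkt_sq (n-k) (ξ - (k:ℝ)*s); push_cast at this ⊢; linarith
  have hb : b ^ 2 = 2 + s ^ 2 := by
    have := brkt_sq 1 s; push_cast at this ⊢; linarith
  have h : (ξ - (n:ℝ)*s)^2 ≤ 2 * (a^2 * b^2) := by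
    nlinarith [sq_nonneg ((ξ - (k:ℝ)*s) + ((n:ℝ)-k)*s),
      sq_nonneg ((ξ - (k:ℝ)*s) - ((n:ℝ)-k)*s),
      sq_nonneg ((ξ - (k:ℝ)*s)*s), sq_nonneg (((n:ℝ)-k)*s), sq_nonneg s]
  calc |ξ - (n:ℝ)*s| = Real.sqrt ((ξ - (n:ℝ)*s)^2) := (Real.sqrt_sq_eq_abs _).symm
    _ ≤ Real.sqrt (2 * (a^2 * b^2)) := Real.sqrt_le_sqrt h
    _ = Real.sqrt 2 * (a * b) := by
        rw [Real.sqrt_mul (by norm_num), show a^2*b^2 = (a*b)^2 by ring,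
          Real.sqrt_sq (by positivity)]

/-- Splitting of the weight:
`A^{λ,p}_n(ξ)|ξ−ns| ≤ C_p (A^{λ,p+1}_{n−k}(ξ−ks) A^{λ,1}_1(s)
 + A^{λ,1}_{n−k}(ξ−ks) A^{λ,p+1}_1(s))` for `k = ±1`, with `C_p`
depending only on `p`. -/
theorem stmt10 (p : ℕ) :
    ∃ C : ℝ, 0 < C ∧ ∀ (ξ s lam : ℝ) (n k : ℤ),
      (k = 1 ∨ k = -1) → 0 ≤ lam →
      Awt lam p n ξ * |ξ - (n : ℝ) * s|
        ≤ C * (Awt lam (p + 1) (n - k) (ξ - (k : ℝ) * s) * Awt lam 1 1 s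
             + Awt lam 1 (n - k) (ξ - (k : ℝ) * s) * Awt lam (p + 1) 1 s) := by
  refine ⟨Real.sqrt 2 * 2 ^ p, by positivity, ?_⟩
  intro ξ s lam n k hk hlam
  have hk2 : ((k:ℝ))^2 = 1 := by rcases hk with h | h <;> subst h <;> norm_num
  set a := brkt (n-k) (ξ - (k:ℝ)*s) with hadef
  set b := brkt 1 s with hbdef
  set c := brkt n ξ with hcdef
  have ha1 : 1 ≤ a := brkt_one_le _ _
  have hb1 : 1 ≤ b := brkt_one_le _ _
  have hc1 : 1 ≤ c := brkt_one_le _ _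
  have ha0 : 0 ≤ a := by linarith
  have hb0 : 0 ≤ b := by linarith
  have hc0 : 0 ≤ c := by linarith
  have hkr : (k:ℝ) = 1 ∨ (k:ℝ) = -1 := by rcases hk with h | h <;> subst h <;> norm_num
  have htri : c ≤ a + b := brkt_tri n k ξ s hkr
  have habs : |ξ - (n:ℝ)*s| ≤ Real.sqrt 2 * (a * b) := abs_bound n k ξ s hk2
  have hexp : Real.exp (lam * c) ≤ Real.exp (lam * a) * Real.exp (lam * b) := by
    rw [← Real.exp_add]
    apply Real.exp_le_exp.2
    nlinarith [mul_le_mul_of_nonneg_left htri hlam]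
  have hpow : c ^ p ≤ 2 ^ p * (a ^ p + b ^ p) := by
    have h1 : c ^ p ≤ (a + b) ^ p := pow_le_pow_left₀ hc0 htri p
    rcases le_total a b with h | h
    · have h2 : (a + b) ^ p ≤ (2 * b) ^ p := pow_le_pow_left₀ (by linarith) (by linarith) p
      have : (2:ℝ) ^ p * b ^ p ≤ 2 ^ p * (a ^ p + b ^ p) := by
        have : (0:ℝ) ≤ a ^ p := pow_nonneg ha0 p
        nlinarith [pow_pos (show (0:ℝ) < 2 by norm_num) p]
      calc c ^ p ≤ (2*b)^p := le_trans h1 h2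
        _ = 2^p * b^p := mul_pow 2 b p
        _ ≤ _ := this
    · have h2 : (a + b) ^ p ≤ (2 * a) ^ p := pow_le_pow_left₀ (by linarith) (by linarith) p
      have : (2:ℝ) ^ p * a ^ p ≤ 2 ^ p * (a ^ p + b ^ p) := by
        have : (0:ℝ) ≤ b ^ p := pow_nonneg hb0 p
        nlinarith [pow_pos (show (0:ℝ) < 2 by norm_num) p]
      calc c ^ p ≤ (2*a)^p := le_trans h1 h2
        _ = 2^p * a^p := mul_pow 2 a p
        _ ≤ _ := this
  have key : Real.exp (lam * c) * c ^ p * |ξ - (n:ℝ)*s| ≤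
      (Real.exp (lam * a) * Real.exp (lam * b)) * (2 ^ p * (a ^ p + b ^ p)) *
      (Real.sqrt 2 * (a * b)) := by
    apply mul_le_mul _ habs (abs_nonneg _) (by positivity)
    exact mul_le_mul hexp hpow (by positivity) (by positivity)
  calc Awt lam p n ξ * |ξ - (n : ℝ) * s|
      = Real.exp (lam * c) * c ^ p * |ξ - (n:ℝ)*s| := by rw [Awt]
    _ ≤ (Real.exp (lam * a) * Real.exp (lam * b)) * (2 ^ p * (a ^ p + b ^ p)) *
        (Real.sqrt 2 * (a * b)) := key
    _ = Real.sqrt 2 * 2 ^ p *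
        (Awt lam (p + 1) (n - k) (ξ - (k : ℝ) * s) * Awt lam 1 1 s
          + Awt lam 1 (n - k) (ξ - (k : ℝ) * s) * Awt lam (p + 1) 1 s) := by
        simp only [Awt, ← hadef, ← hbdef, pow_succ, pow_one]
        ring
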